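/- A graph G is minimally 2-connected if and only if G is 2-connected and no cycle of G has a chord. -/

import Mathlib

open SimpleGraph

open scoped Classical in
noncomputable def adjMat {V : Type} [Fintype V] (G : SimpleGraph V) : Matrix V V ℝ :=
  Matrix.of fun i j => if G.Adj i j then (1 : ℝ) else 0

noncomputable def specRad {V : Type} [Fintype V] [DecidableEq V] (G : SimpleGraph V) : ℝ :=
  sSup (spectrum ℝ (adjMat G))

def TwoEdgeConnected {V : Type} (G : SimpleGraph V) : Prop :=
  G.Connected ∧ G.edgeSet.Nonempty ∧ ∀ e ∈ G.edgeSet, (G.deleteEdges {e}).Connected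

def MinTwoEdgeConnected {V : Type} (G : SimpleGraph V) : Prop :=
  TwoEdgeConnected G ∧ ∀ e ∈ G.edgeSet, ¬ TwoEdgeConnected (G.deleteEdges {e})

def TwoConnected {V : Type} (G : SimpleGraph V) : Prop :=
  3 ≤ Nat.card V ∧ ∀ v : V, ((⊤ : G.Subgraph).deleteVerts {v}).coe.Connected

def MinTwoConnected {V : Type} (G : SimpleGraph V) : Prop :=
  TwoConnected G ∧ ∀ e ∈ G.edgeSet, ¬ TwoConnected (G.deleteEdges {e})

def HasChord {V : Type} (G : SimpleGraph V) {v : V} (c : G.Walk v v) : Prop :=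
  ∃ a b, G.Adj a b ∧ a ∈ c.support ∧ b ∈ c.support ∧ s(a, b) ∉ c.edges

/-- `K_{2,t}` with one edge subdivided: `Sum.inl 0, Sum.inl 1` are the two vertices of the
small part, `Sum.inl 2` is the subdivision vertex, `Sum.inr i` the large part. -/
def SK2 (t : ℕ) : SimpleGraph (Fin 3 ⊕ Fin t) :=
  SimpleGraph.fromRel (fun x y =>
    (x = Sum.inl 0 ∧ y = Sum.inl 2) ∨
    (∃ i : Fin t, x = Sum.inl 2 ∧ y = Sum.inr i ∧ i.val = 0) ∨
    (∃ i : Fin t, x = Sum.inl 1 ∧ y = Sum.inr i) ∨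
    (∃ i : Fin t, x = Sum.inl 0 ∧ y = Sum.inr i ∧ i.val ≠ 0))

/-- `K_{2,s} * K₃`: `inl 0, inl 1` the small part of `K_{2,s}`, a triangle on
`inl 0, inl 2, inl 3`, and `inr i` the large part. -/
def K2sK3 (t : ℕ) : SimpleGraph (Fin 4 ⊕ Fin t) :=
  SimpleGraph.fromRel (fun x y =>
    (x = Sum.inl 0 ∧ y = Sum.inl 2) ∨ (x = Sum.inl 0 ∧ y = Sum.inl 3) ∨
    (x = Sum.inl 2 ∧ y = Sum.inl 3) ∨
    (∃ i : Fin t, (x = Sum.inl 0 ∨ x = Sum.inl 1) ∧ y = Sum.inr i))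

/-- The friendship graph `F_t`: vertex `0` is the common center, the `i`-th triangle is
`{0, 2i+1, 2i+2}`. -/
def friendship (t : ℕ) : SimpleGraph (Fin (2 * t + 1)) :=
  SimpleGraph.fromRel (fun x y =>
    x = 0 ∨ (∃ i : Fin t, (x : ℕ) = 2 * i + 1 ∧ (y : ℕ) = 2 * i + 2))

/-- Disjoint union of two simple graphs. -/
def disjUnion {α β : Type} (G : SimpleGraph α) (H : SimpleGraph β) : SimpleGraph (α ⊕ β) :=
  SimpleGraph.fromRel (fun x y =>
    (∃ a b, x = Sum.inl a ∧ y = Sum.inl b ∧ G.Adj a b) ∨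
    (∃ a b, x = Sum.inr a ∧ y = Sum.inr b ∧ H.Adj a b))

/-- Identifying `v ∈ H` with `w ∈ K` in the disjoint union of `H` and `K`. -/
def wedge {α β : Type} (H : SimpleGraph α) (K : SimpleGraph β) (v : α) (w : β) :
    SimpleGraph (α ⊕ {b : β // b ≠ w}) :=
  SimpleGraph.fromRel (fun x y =>
    (∃ a b, x = Sum.inl a ∧ y = Sum.inl b ∧ H.Adj a b) ∨
    (∃ a b, x = Sum.inr a ∧ y = Sum.inr b ∧ K.Adj a.1 b.1) ∨
    (∃ b, x = Sum.inl v ∧ y = Sum.inr b ∧ K.Adj w b.1))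

def IsStarCenter {V : Type} (G : SimpleGraph V) (v : V) : Prop :=
  (∀ w, w ≠ v → G.Adj v w) ∧ ∀ a b, G.Adj a b → a = v ∨ b = v

section AuxProof

open SimpleGraph Walk

variable {V : Type}

private lemma exists_ne_ne [Fintype V] (h3 : 3 ≤ Nat.card V) (a b : V) :
    ∃ c : V, c ≠ a ∧ c ≠ b := by
  classical
  by_contra h
  push_neg at h
  have hsub : (Finset.univ : Finset V) ⊆ {a, b} := by
    intro x _
    rcases eq_or_ne x a with rfl | hxa
    · simp
    · simp [h x hxa]
  have := Finset.card_le_card hsub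
  have hcard : Nat.card V = Fintype.card V := Nat.card_eq_fintype_card
  have h2 : ({a, b} : Finset V).card ≤ 2 := Finset.card_insert_le _ _ |>.trans (by simp)
  simp only [Finset.card_univ] at this
  omega

private lemma mem_delVerts {G : SimpleGraph V} {v x : V} (h : x ≠ v) :
    x ∈ ((⊤ : G.Subgraph).deleteVerts {v}).verts := by
  simp [h]

private lemma ne_of_mem_delVerts {G : SimpleGraph V} {v : V}
    (x : ((⊤ : G.Subgraph).deleteVerts {v}).verts) : (x : V) ≠ v := by
  have h := x.2
  simp only [Subgraph.deleteVerts_verts, Subgraph.verts_top, Set.mem_diff,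
    Set.mem_singleton_iff] at h
  exact h.2

private lemma del_adj {G : SimpleGraph V} {v : V}
    {x y : ((⊤ : G.Subgraph).deleteVerts {v}).verts} :
    ((⊤ : G.Subgraph).deleteVerts {v}).coe.Adj x y ↔ G.Adj x y := by
  constructor
  · intro h
    exact ((⊤ : G.Subgraph).deleteVerts {v}).coe_adj_sub _ _ h
  · intro h
    simp only [Subgraph.coe_adj, Subgraph.deleteVerts_adj, Subgraph.verts_top, Set.mem_univ,
      Set.mem_singleton_iff, Subgraph.top_adj]
    exact ⟨trivial, ne_of_mem_delVerts x, trivial, ne_of_mem_delVerts y, h⟩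

private lemma exists_walk_avoid {G : SimpleGraph V} {v : V}
    {x y : ((⊤ : G.Subgraph).deleteVerts {v}).verts}
    (h : ((⊤ : G.Subgraph).deleteVerts {v}).coe.Reachable x y) :
    ∃ p : G.Walk x y, v ∉ p.support := by
  obtain ⟨q⟩ := h
  refine ⟨q.map (Subgraph.hom _), ?_⟩
  intro hmem
  have hs := Walk.support_map (Subgraph.hom ((⊤ : G.Subgraph).deleteVerts {v})) q
  have hmem' : v ∈ (q.map (Subgraph.hom _)).support := hmem
  rw [hs, List.mem_map] at hmem'
  obtain ⟨z, _, hz⟩ := hmem'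
  exact ne_of_mem_delVerts z hz

private lemma reachable_del_of_walk {G H : SimpleGraph V} {v : V} {x y : V}
    (p : G.Walk x y) :
    (∀ e ∈ p.edges, e ∈ H.edgeSet) → v ∉ p.support →
    ∀ (hx : x ∈ ((⊤ : H.Subgraph).deleteVerts {v}).verts)
      (hy : y ∈ ((⊤ : H.Subgraph).deleteVerts {v}).verts),
      ((⊤ : H.Subgraph).deleteVerts {v}).coe.Reachable ⟨x, hx⟩ ⟨y, hy⟩ := by
  induction p with
  | nil => intro _ _ hx hy; rfl
  | @cons a b c h q ih =>
    intro hE hv hx hy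
    have hbv : b ≠ v := by
      intro hbv
      exact hv (by simp [← hbv, q.start_mem_support])
    have hb : b ∈ ((⊤ : H.Subgraph).deleteVerts {v}).verts := mem_delVerts hbv
    have hH : H.Adj a b := H.mem_edgeSet.mp (hE _ (by simp))
    have step : ((⊤ : H.Subgraph).deleteVerts {v}).coe.Adj ⟨a, hx⟩ ⟨b, hb⟩ := del_adj.mpr hH
    refine step.reachable.trans (ih (fun e he => hE e (by simp [he])) ?_ hb hy)
    intro hv'
    exact hv (by simp [hv'])

private lemma mem_support_rotate_iff [DecidableEq V] {G : SimpleGraph V} {u a b : V} {c : G.Walk u u}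
    (ha : a ∈ c.support) : b ∈ (c.rotate a ha).support ↔ b ∈ c.support := by
  unfold Walk.rotate
  rw [mem_support_append_iff]
  conv_rhs => rw [← take_spec c ha, mem_support_append_iff]
  tauto

private lemma exists_arc {G : SimpleGraph V} {u a b w : V} {c : G.Walk u u}
    (hc : c.IsCycle) (ha : a ∈ c.support) (hb : b ∈ c.support)
    (hab : a ≠ b) (hwa : w ≠ a) (hwb : w ≠ b) :
    ∃ p : G.Walk a b, w ∉ p.support ∧ ∀ e ∈ p.edges, e ∈ c.edges := by
  classical
  have hcyc' : (c.rotate a ha).IsCycle := hc.rotate ha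
  set c' : G.Walk a a := c.rotate a ha with hc'def
  have hb' : b ∈ c'.support := (mem_support_rotate_iff ha).mpr hb
  have hedge : ∀ e ∈ c'.edges, e ∈ c.edges := fun e he => (rotate_edges c a ha).mem_iff.mp he
  have hspec := take_spec c' hb'
  have hnd : c'.support.tail.Nodup := hcyc'.support_nodup
  have hdecomp : c'.support.tail =
      (c'.takeUntil b hb').support.tail ++ (c'.dropUntil b hb').support.tail := by
    conv_lhs => rw [← hspec]
    rw [support_append, support_eq_cons (c'.takeUntil b hb')]
    simp
  rw [hdecomp] at hnd
  have hdisj := List.disjoint_of_nodup_append hnd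
  by_cases hw1 : w ∈ (c'.takeUntil b hb').support
  · refine ⟨(c'.dropUntil b hb').reverse, ?_, ?_⟩
    · rw [support_reverse, List.mem_reverse]
      intro hw2
      have hw1' : w ∈ (c'.takeUntil b hb').support.tail := by
        rw [support_eq_cons] at hw1
        rcases List.mem_cons.mp hw1 with h | h
        · exact absurd h hwa
        · exact h
      have hw2' : w ∈ (c'.dropUntil b hb').support.tail := by
        rw [support_eq_cons] at hw2
        rcases List.mem_cons.mp hw2 with h | h
        · exact absurd h hwb
        · exact h
      exact hdisj hw1' hw2'
    · intro e he
      rw [edges_reverse, List.mem_reverse] at he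
      exact hedge e (edges_dropUntil_subset c' hb' he)
  · exact ⟨c'.takeUntil b hb', hw1, fun e he => hedge e (edges_takeUntil_subset c' hb' he)⟩

end AuxProof
private lemma reach_delH {V : Type} {G : SimpleGraph V} {a b w : V} {u : V} {c : G.Walk u u}
    (hc : c.IsCycle) (hadj : G.Adj a b) (ha : a ∈ c.support) (hb : b ∈ c.support)
    (he : s(a, b) ∉ c.edges) :
    ∀ {x y : ((⊤ : G.Subgraph).deleteVerts {w}).verts}
      (q : ((⊤ : G.Subgraph).deleteVerts {w}).coe.Walk x y),
      ((⊤ : (G.deleteEdges {s(a, b)}).Subgraph).deleteVerts {w}).coe.Reachable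
        ⟨x.1, mem_delVerts (ne_of_mem_delVerts x)⟩ ⟨y.1, mem_delVerts (ne_of_mem_delVerts y)⟩ := by
  intro x y q
  have hEdges : ∀ e ∈ c.edges, e ∈ (G.deleteEdges {s(a, b)}).edgeSet := by
    intro e hec
    rw [SimpleGraph.edgeSet_deleteEdges]
    refine ⟨c.edges_subset_edgeSet hec, ?_⟩
    simp only [Set.mem_singleton_iff]
    rintro rfl
    exact he hec
  induction q with
  | nil => rfl
  | @cons p r t hpr q ih =>
    refine Reachable.trans ?_ ih
    have hG : G.Adj p.1 r.1 := del_adj.mp hpr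
    have hpw := ne_of_mem_delVerts p
    have hrw := ne_of_mem_delVerts r
    by_cases hcase : s(p.1, r.1) = s(a, b)
    · rcases Sym2.eq_iff.mp hcase with ⟨h1, h2⟩ | ⟨h1, h2⟩
      · obtain ⟨parc, hpsup, hpedge⟩ :=
          exists_arc hc ha hb hadj.ne (fun hh => hpw (h1.trans hh.symm))
            (fun hh => hrw (h2.trans hh.symm))
        have := reachable_del_of_walk (H := G.deleteEdges {s(a, b)}) (v := w)
          (parc.copy h1.symm h2.symm)
          (by intro e hee; rw [Walk.edges_copy] at hee; exact hEdges e (hpedge e hee))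
          (by rw [Walk.support_copy]; exact hpsup)
          (mem_delVerts hpw) (mem_delVerts hrw)
        exact this
      · obtain ⟨parc, hpsup, hpedge⟩ :=
          exists_arc hc hb ha hadj.ne.symm (fun hh => hpw (h1.trans hh.symm))
            (fun hh => hrw (h2.trans hh.symm))
        have hpedge' : ∀ e ∈ parc.edges, e ∈ (G.deleteEdges {s(a, b)}).edgeSet :=
          fun e hee => hEdges e (hpedge e hee)
        exact reachable_del_of_walk (parc.copy h1.symm h2.symm)
          (by intro e hee; rw [Walk.edges_copy] at hee; exact hpedge' e hee)
          (by rw [Walk.support_copy]; exact hpsup)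
          (mem_delVerts hpw) (mem_delVerts hrw)
    · have hH : (G.deleteEdges {s(a, b)}).Adj p.1 r.1 := by
        rw [SimpleGraph.deleteEdges_adj]
        exact ⟨hG, by simpa using hcase⟩
      exact (del_adj.mpr hH).reachable

private lemma twoConnected_deleteEdges_of_chord {V : Type} [Fintype V] {G : SimpleGraph V}
    (hG : TwoConnected G) {u : V} {c : G.Walk u u} (hc : c.IsCycle)
    {a b : V} (hadj : G.Adj a b) (ha : a ∈ c.support) (hb : b ∈ c.support)
    (he : s(a, b) ∉ c.edges) : TwoConnected (G.deleteEdges {s(a, b)}) := by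
  obtain ⟨h3, hdel⟩ := hG
  refine ⟨h3, fun w => ?_⟩
  obtain ⟨z, hz, -⟩ := exists_ne_ne h3 w w
  haveI : Nonempty ((⊤ : (G.deleteEdges {s(a, b)}).Subgraph).deleteVerts {w}).verts :=
    ⟨⟨z, mem_delVerts hz⟩⟩
  refine ⟨fun x y => ?_⟩
  have hx := ne_of_mem_delVerts x
  have hy := ne_of_mem_delVerts y
  obtain ⟨q⟩ := (hdel w).preconnected ⟨x.1, mem_delVerts hx⟩ ⟨y.1, mem_delVerts hy⟩
  exact reach_delH hc hadj ha hb he q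
private lemma edges_mapLe {V : Type} {G G' : SimpleGraph V} (hle : G ≤ G') {u v : V}
    (p : G.Walk u v) : (p.mapLe hle).edges = p.edges := by
  induction p with
  | nil => rfl
  | cons h q ih =>
    simp only [Walk.mapLe, Walk.map_cons, Walk.edges_cons,
      Hom.coe_ofLE, id_eq] at *
    rw [ih]

private lemma support_mapLe {V : Type} {G G' : SimpleGraph V} (hle : G ≤ G') {u v : V}
    (p : G.Walk u v) : (p.mapLe hle).support = p.support := by
  induction p with
  | nil => rfl
  | cons h q ih =>
    simp only [Walk.mapLe, Walk.map_cons, Walk.support_cons,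
      Hom.coe_ofLE, id_eq] at *
    rw [ih]

private lemma exists_adj_avoiding {V : Type} [Fintype V] {H : SimpleGraph V}
    (h3 : 3 ≤ Nat.card H.support.Elem → True) : True := trivial

private lemma exists_adj_ne' {V : Type} [Fintype V] {H : SimpleGraph V}
    (h2 : TwoConnected H) {v u : V} (huv : u ≠ v) : ∃ z, H.Adj v z ∧ z ≠ u := by
  obtain ⟨h3, hdel⟩ := h2
  obtain ⟨t, htv, htu⟩ := exists_ne_ne h3 v u
  have hvu : v ≠ u := huv.symm
  have hreach := (hdel u).preconnected ⟨v, mem_delVerts hvu⟩ ⟨t, mem_delVerts htu⟩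
  obtain ⟨q⟩ := hreach
  have hne : (⟨v, mem_delVerts hvu⟩ : ((⊤ : H.Subgraph).deleteVerts {u}).verts) ≠
      ⟨t, mem_delVerts htu⟩ := by
    intro hh
    exact htv (congrArg Subtype.val hh).symm
  obtain ⟨z, hz, -, -⟩ := Walk.exists_eq_cons_of_ne hne q
  exact ⟨z.1, del_adj.mp hz, ne_of_mem_delVerts z⟩

private lemma exists_adj_ne {V : Type} [Fintype V] {H : SimpleGraph V}
    (h2 : TwoConnected H) (v u : V) : ∃ z, H.Adj v z ∧ z ≠ u := by
  rcases eq_or_ne u v with rfl | huv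
  · obtain ⟨w, hwv, -⟩ := exists_ne_ne h2.1 u u
    obtain ⟨z, hz, -⟩ := exists_adj_ne' h2 (v := u) (u := w) (by exact fun h => hwv h)
    exact ⟨z, hz, hz.ne'⟩
  · exact exists_adj_ne' h2 huv

private lemma connected_of_twoConnected {V : Type} [Fintype V] {H : SimpleGraph V}
    (h2 : TwoConnected H) : H.Connected := by
  obtain ⟨h3, hdel⟩ := h2
  haveI : Nonempty V := by
    have : 0 < Nat.card V := by omega
    exact Nat.card_pos_iff.mp this |>.1
  refine ⟨fun x y => ?_⟩
  rcases eq_or_ne x y with rfl | hxy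
  · rfl
  obtain ⟨w, hwx, hwy⟩ := exists_ne_ne h3 x y
  have hreach := (hdel w).preconnected ⟨x, mem_delVerts hwx.symm⟩ ⟨y, mem_delVerts hwy.symm⟩
  exact hreach.map (SimpleGraph.Subgraph.hom _)

private lemma cycle_through_adj {V : Type} [Fintype V] {H : SimpleGraph V}
    (h2 : TwoConnected H) {x y : V} (hadj : H.Adj x y) :
    ∃ (u : V) (c : H.Walk u u), c.IsCycle ∧ x ∈ c.support ∧ y ∈ c.support := by
  classical
  obtain ⟨y', hyy', hy'x⟩ := exists_adj_ne h2 y x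
  have hxy : x ≠ y := hadj.ne
  have hy'y : y' ≠ y := hyy'.ne'
  obtain ⟨q0, hq0⟩ := exists_walk_avoid
    ((h2.2 y).preconnected ⟨x, mem_delVerts hxy⟩ ⟨y', mem_delVerts hy'y⟩)
  have hEq0 : ∀ e ∈ q0.edges, e ∉ ({s(x, y)} : Set (Sym2 V)) := by
    intro e hee
    simp only [Set.mem_singleton_iff]
    rintro rfl
    exact hq0 (q0.snd_mem_support_of_mem_edges hee)
  have hstep : (H.deleteEdges {s(x, y)}).Adj y' y := by
    rw [SimpleGraph.deleteEdges_adj]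
    refine ⟨hyy'.symm, ?_⟩
    simp only [Set.mem_singleton_iff, Sym2.eq_iff]
    rintro (⟨rfl, -⟩ | ⟨rfl, -⟩)
    · exact hy'x rfl
    · exact hy'y rfl
  have hreach : (H.deleteEdges {s(x, y)}).Reachable x y :=
    Reachable.trans ⟨q0.toDeleteEdges {s(x, y)} hEq0⟩ hstep.reachable
  obtain ⟨q2⟩ := hreach
  have hP := q2.toPath.2
  set P : (H.deleteEdges {s(x, y)}).Walk x y := q2.toPath.1 with hPdef
  have hPedges : ∀ e ∈ P.edges, e ∈ (H.deleteEdges {s(x, y)}).edgeSet :=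
    fun e hee => P.edges_subset_edgeSet hee
  let P' : H.Walk x y := P.mapLe (SimpleGraph.deleteEdges_le _)
  have hP'path : P'.IsPath := hP.mapLe _
  have hP'edges : P'.edges = P.edges := edges_mapLe _ P
  refine ⟨y, Walk.cons hadj.symm P', ?_, ?_, ?_⟩
  · rw [Walk.cons_isCycle_iff]
    refine ⟨hP'path, ?_⟩
    intro hmem
    rw [hP'edges] at hmem
    have := hPedges _ hmem
    rw [SimpleGraph.edgeSet_deleteEdges] at this
    exact this.2 (by rw [Sym2.eq_swap]; rfl)
  · simp [Walk.support_cons]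
  · simp [Walk.support_cons]
private lemma exists_first_hit {V : Type} {H : SimpleGraph V} {s t : V} (w : H.Walk s t)
    (S : Set V) (ht : t ∈ S) :
    ∃ (u₀ : V) (w' : H.Walk s u₀), u₀ ∈ S ∧ (∀ z ∈ w'.support, z ∈ S → z = u₀) ∧
      ∀ z ∈ w'.support, z ∈ w.support := by
  classical
  induction w with
  | nil =>
    exact ⟨_, Walk.nil, ht, fun z hz _ => by simpa using hz, fun z hz => by simpa using hz⟩
  | @cons a b c h q ih =>
    by_cases hs : a ∈ S
    · refine ⟨a, Walk.nil, hs, fun z hz _ => by simpa using hz, ?_⟩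
      intro z hz
      simp only [Walk.support_nil, List.mem_singleton] at hz
      simp [hz]
    · obtain ⟨u₀, w', hu₀, hhit, hsub⟩ := ih ht
      refine ⟨u₀, Walk.cons h w', hu₀, ?_, ?_⟩
      · intro z hz hzS
        rw [Walk.support_cons] at hz
        rcases List.mem_cons.mp hz with rfl | hz'
        · exact absurd hzS hs
        · exact hhit z hz' hzS
      · intro z hz
        rw [Walk.support_cons] at hz ⊢
        rcases List.mem_cons.mp hz with rfl | hz'
        · exact List.mem_cons_self
        · exact List.mem_cons_of_mem _ (hsub z hz')

private lemma cycle_through_two {V : Type} [Fintype V] {H : SimpleGraph V}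
    (h2 : TwoConnected H) {x y : V} (hxy : x ≠ y) :
    ∃ (u : V) (c : H.Walk u u), c.IsCycle ∧ x ∈ c.support ∧ y ∈ c.support := by
  classical
  have hconn := connected_of_twoConnected h2
  suffices hmain : ∀ n : ℕ, ∀ {x y : V}, H.dist x y = n → x ≠ y →
      ∃ (u : V) (c : H.Walk u u), c.IsCycle ∧ x ∈ c.support ∧ y ∈ c.support by
    exact hmain _ rfl hxy
  intro n
  induction n using Nat.strong_induction_on with
  | _ n ih =>
    intro x y hd hxy
    obtain ⟨p, hp⟩ := hconn.exists_walk_length_eq_dist x y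
    rw [hd] at hp
    have hn0 : n ≠ 0 := by
      rintro rfl
      exact hxy (p.eq_of_length_eq_zero hp)
    obtain ⟨y', hyy', q, hq⟩ := Walk.exists_eq_cons_of_ne hxy.symm p.reverse
    have hqlen : q.length + 1 = n := by
      have h1 := congrArg Walk.length hq
      rw [Walk.length_reverse, hp, Walk.length_cons] at h1
      omega
    by_cases hy'x : y' = x
    · subst hy'x
      exact cycle_through_adj h2 hyy'.symm
    · have hdy'y : H.dist y' y ≤ 1 := by
        have h1 := SimpleGraph.dist_le (Walk.cons hyy'.symm Walk.nil : H.Walk y' y)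
        simpa using h1
      have hdxy' : H.dist x y' = n - 1 := by
        have hle : H.dist x y' ≤ n - 1 := by
          have h1 := SimpleGraph.dist_le q.reverse
          rw [Walk.length_reverse] at h1
          omega
        have htri := hconn.dist_triangle (u := x) (v := y') (w := y)
        omega
      have hn1 : n ≠ 1 := by
        rintro rfl
        have h0 : H.dist x y' = 0 := by omega
        rcases (SimpleGraph.dist_eq_zero_iff_eq_or_not_reachable).mp h0 with h | h
        · exact hy'x h.symm
        · exact h (hconn.preconnected x y')
      obtain ⟨u, c0, hc0, hxc0, hy'c0⟩ := ih (n - 1) (by omega) hdxy' (fun h => hy'x h.symm)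
      by_cases hyc : y ∈ c0.support
      · exact ⟨u, c0, hc0, hxc0, hyc⟩
      · set c' := c0.rotate y' hy'c0 with hc'def
        have hcyc' : c'.IsCycle := hc0.rotate hy'c0
        have hxc' : x ∈ c'.support := (mem_support_rotate_iff hy'c0).mpr hxc0
        have hyc' : y ∉ c'.support := fun h => hyc ((mem_support_rotate_iff hy'c0).mp h)
        have hyy'ne : y ≠ y' := hyy'.ne
        have hxy' : x ≠ y' := fun h => hy'x h.symm
        obtain ⟨W0, hW0⟩ := exists_walk_avoid
          ((h2.2 y').preconnected ⟨y, mem_delVerts hyy'ne⟩ ⟨x, mem_delVerts hxy'⟩)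
        have hW0' : y' ∉ (W0 : H.Walk y x).support := hW0
        obtain ⟨u₀, w1, hu₀S, hhit, hsub⟩ :=
          exists_first_hit (W0 : H.Walk y x) {z | z ∈ c'.support} hxc'
        have hu₀c' : u₀ ∈ c'.support := hu₀S
        set w2 : H.Walk y u₀ := w1.toPath.1 with hw2def
        have hw2path : w2.IsPath := w1.toPath.2
        have hw2sub : ∀ z ∈ w2.support, z ∈ w1.support := fun z hz =>
          w1.support_toPath_subset hz
        have hy'w2 : y' ∉ w2.support := fun h => hW0' (hsub _ (hw2sub _ h))
        have hu₀y' : u₀ ≠ y' := by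
          intro h
          exact hW0' (hsub _ (h ▸ w1.end_mem_support))
        have hu₀y : u₀ ≠ y := fun h => hyc' (h ▸ hu₀c')
        have hspec := Walk.take_spec c' hu₀c'
        have hnd : c'.support.tail.Nodup := hcyc'.support_nodup
        have hdecomp : c'.support.tail =
            (c'.takeUntil u₀ hu₀c').support.tail ++ (c'.dropUntil u₀ hu₀c').support.tail := by
          conv_lhs => rw [← hspec]
          rw [Walk.support_append, Walk.support_eq_cons (c'.takeUntil u₀ hu₀c')]
          simp
        rw [hdecomp] at hnd
        obtain ⟨hnd1, hnd2, hdisj⟩ := List.nodup_append.mp hnd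
        have hy'A2tail : y' ∈ (c'.dropUntil u₀ hu₀c').support.tail := by
          have hy'mem : y' ∈ (c'.dropUntil u₀ hu₀c').support := Walk.end_mem_support _
          rw [Walk.support_eq_cons] at hy'mem
          rcases List.mem_cons.mp hy'mem with h | h
          · exact absurd h.symm hu₀y'
          · exact h
        have hu₀A1tail : u₀ ∈ (c'.takeUntil u₀ hu₀c').support.tail := by
          have h1 := Walk.end_mem_support (c'.takeUntil u₀ hu₀c')
          rw [Walk.support_eq_cons] at h1
          rcases List.mem_cons.mp h1 with h | h
          · exact absurd h hu₀y'
          · exact h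
        have hA1path : (c'.takeUntil u₀ hu₀c').IsPath := by
          rw [Walk.isPath_def, Walk.support_eq_cons]
          exact List.nodup_cons.mpr ⟨fun h => hdisj _ h _ hy'A2tail rfl, hnd1⟩
        have hA2path : (c'.dropUntil u₀ hu₀c').IsPath := by
          rw [Walk.isPath_def, Walk.support_eq_cons]
          exact List.nodup_cons.mpr ⟨fun h => hdisj _ hu₀A1tail _ h rfl, hnd2⟩
        have hxsplit : x ∈ (c'.takeUntil u₀ hu₀c').support ∨
            x ∈ (c'.dropUntil u₀ hu₀c').support := by
          rw [← Walk.mem_support_append_iff, hspec]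
          exact hxc'
        obtain ⟨R, hRpath, hxR, hRsub⟩ :
            ∃ R : H.Walk u₀ y', R.IsPath ∧ x ∈ R.support ∧ ∀ z ∈ R.support, z ∈ c'.support := by
          rcases hxsplit with h | h
          · refine ⟨(c'.takeUntil u₀ hu₀c').reverse, hA1path.reverse, ?_, ?_⟩
            · rw [Walk.support_reverse, List.mem_reverse]
              exact h
            · intro z hz
              rw [Walk.support_reverse, List.mem_reverse] at hz
              exact Walk.support_takeUntil_subset _ _ hz
          · exact ⟨c'.dropUntil u₀ hu₀c', hA2path, h,
              fun z hz => Walk.support_dropUntil_subset _ _ hz⟩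
        set W : H.Walk y y' := w2.append R with hWdef
        have hWpath : W.IsPath := by
          rw [Walk.isPath_def, Walk.support_append, List.nodup_append]
          refine ⟨hw2path.support_nodup, ?_, ?_⟩
          · have h1 := hRpath.support_nodup
            rw [Walk.support_eq_cons] at h1
            exact (List.nodup_cons.mp h1).2
          · intro z hz1 z2 hz2 hzz
            subst hzz
            have hzR : z ∈ R.support := List.mem_of_mem_tail hz2
            have hzc' : z ∈ c'.support := hRsub z hzR
            have hz_eq : z = u₀ := hhit z (hw2sub z hz1) hzc'
            have hu₀nt : u₀ ∉ R.support.tail := by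
              have h1 := hRpath.support_nodup
              rw [Walk.support_eq_cons] at h1
              exact (List.nodup_cons.mp h1).1
            exact hu₀nt (hz_eq ▸ hz2)
        have hWedge : s(y', y) ∉ W.edges := by
          intro hmem
          rw [Walk.edges_append, List.mem_append] at hmem
          rcases hmem with h | h
          · exact hy'w2 (w2.fst_mem_support_of_mem_edges h)
          · exact hyc' (hRsub _ (R.snd_mem_support_of_mem_edges h))
        refine ⟨y', Walk.cons hyy'.symm W, ?_, ?_, ?_⟩
        · exact (Walk.cons_isCycle_iff W hyy'.symm).mpr ⟨hWpath, hWedge⟩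
        · rw [Walk.support_cons]
          exact List.mem_cons_of_mem _ (by rw [Walk.mem_support_append_iff]; exact Or.inr hxR)
        · rw [Walk.support_cons]
          exact List.mem_cons_of_mem _ W.start_mem_support

theorem stmt6 {V : Type} [Fintype V] (G : SimpleGraph V) :
    MinTwoConnected G ↔
      (TwoConnected G ∧ ∀ (v : V) (c : G.Walk v v), c.IsCycle → ¬ HasChord G c) := by
  constructor
  · rintro ⟨h2, hmin⟩
    refine ⟨h2, fun v c hc hchord => ?_⟩
    obtain ⟨a, b, hadj, ha, hb, he⟩ := hchord
    exact hmin s(a, b) (G.mem_edgeSet.mpr hadj)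
      (twoConnected_deleteEdges_of_chord h2 hc hadj ha hb he)
  · rintro ⟨h2, hch⟩
    refine ⟨h2, ?_⟩
    intro e
    induction e using Sym2.ind with
    | _ x y =>
      intro he h2e
      have hadj : G.Adj x y := G.mem_edgeSet.mp he
      have hxy : x ≠ y := hadj.ne
      obtain ⟨u, c, hc, hxc, hyc⟩ := cycle_through_two h2e hxy
      have hle : G.deleteEdges {s(x, y)} ≤ G := SimpleGraph.deleteEdges_le _
      refine hch u (c.mapLe hle) (hc.mapLe hle) ⟨x, y, hadj, ?_, ?_, ?_⟩
      · rw [support_mapLe]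
        exact hxc
      · rw [support_mapLe]
        exact hyc
      · rw [edges_mapLe]
        intro hmem
        have h1 := c.edges_subset_edgeSet hmem
        rw [SimpleGraph.edgeSet_deleteEdges] at h1
        exact h1.2 rfl
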